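/- Let H be a Hermitian matrix on ℂ^X for a finite type X whose off-diagonal entries are all real and non-positive. Then for every real β ≥ 0, every entry of the matrix exponential exp(−βH) is a non-negative real number. -/

import Mathlib

open Matrix

open NormedSpace


lemma entryGood_pow {X : Type} [Fintype X] [DecidableEq X] (M : Matrix X X ℂ)
    (hM : ∀ x y, (M x y).im = 0 ∧ 0 ≤ (M x y).re) :
    ∀ (n : ℕ) x y, ((M ^ n) x y).im = 0 ∧ 0 ≤ ((M ^ n) x y).re := by
  intro n
  induction n with
  | zero =>
    intro x y
    by_cases h : x = y <;> simp [h, Matrix.one_apply]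
  | succ n ih =>
    intro x y
    rw [pow_succ, Matrix.mul_apply]
    constructor
    · rw [Complex.im_sum]
      refine Finset.sum_eq_zero fun k _ => ?_
      rw [Complex.mul_im, (ih x k).1, (hM k y).1]
      ring
    · rw [Complex.re_sum]
      refine Finset.sum_nonneg fun k _ => ?_
      rw [Complex.mul_re, (ih x k).1, (hM k y).1]
      simpa using mul_nonneg (ih x k).2 (hM k y).2

lemma entryGood_exp {X : Type} [Fintype X] [DecidableEq X] (M : Matrix X X ℂ)
    (hM : ∀ x y, (M x y).im = 0 ∧ 0 ≤ (M x y).re) :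
    ∀ x y, ((exp M) x y).im = 0 ∧ 0 ≤ ((exp M) x y).re := by
  letI : SeminormedRing (Matrix X X ℂ) := Matrix.linftyOpSemiNormedRing
  letI : NormedRing (Matrix X X ℂ) := Matrix.linftyOpNormedRing
  letI : NormedAlgebra ℂ (Matrix X X ℂ) := Matrix.linftyOpNormedAlgebra
  intro x y
  have hs : Summable fun n : ℕ => ((n.factorial : ℂ))⁻¹ • M ^ n := expSeries_summable' M
  have hs1 : Summable fun n : ℕ => (((n.factorial : ℂ))⁻¹ • M ^ n) x :=
    hs.map (Pi.evalAddMonoidHom _ x) (continuous_apply x)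
  have hs2 : Summable fun n : ℕ => (((n.factorial : ℂ))⁻¹ • M ^ n) x y :=
    hs1.map (Pi.evalAddMonoidHom _ y) (continuous_apply y)
  have hrw : (exp M) x y = ∑' n : ℕ, ((n.factorial : ℂ))⁻¹ * (M ^ n) x y := by
    rw [exp_eq_tsum ℂ]
    dsimp only
    erw [tsum_apply hs, tsum_apply hs1]
    rfl
  have hterm : ∀ n : ℕ, (((n.factorial : ℂ))⁻¹ * (M ^ n) x y).im = 0 ∧
      0 ≤ (((n.factorial : ℂ))⁻¹ * (M ^ n) x y).re := by
    intro n
    have h1 : ((n.factorial : ℂ))⁻¹ = ((((n.factorial : ℝ))⁻¹ : ℝ) : ℂ) := by push_cast; ring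
    rw [h1]
    constructor
    · rw [Complex.mul_im]
      simp [(entryGood_pow M hM n x y).1]
    · rw [Complex.mul_re]
      simp only [Complex.ofReal_re, Complex.ofReal_im, zero_mul, sub_zero]
      exact mul_nonneg (by positivity) (entryGood_pow M hM n x y).2
  have hs2' : Summable fun n : ℕ => ((n.factorial : ℂ))⁻¹ * (M ^ n) x y := by
    convert hs2 using 1
    rfl
  rw [hrw]
  constructor
  · have := Complex.imCLM.map_tsum hs2'
    simp only [Complex.imCLM_apply] at this
    rw [this]
    simp only [fun n => (hterm n).1]
    exact tsum_zero
  · have := Complex.reCLM.map_tsum hs2'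
    simp only [Complex.reCLM_apply] at this
    rw [this]
    exact tsum_nonneg fun n => (hterm n).2

/-- If `H` is Hermitian with non-positive real off-diagonal entries, then for `β ≥ 0`
every entry of `exp(-βH)` is a non-negative real number. -/
theorem stmt2 {X : Type} [Fintype X] [DecidableEq X]
    (H : Matrix X X ℂ) (hHerm : H.IsHermitian)
    (hstoq : ∀ x y, x ≠ y → (H x y).im = 0 ∧ (H x y).re ≤ 0)
    (β : ℝ) (hβ : 0 ≤ β) :
    ∀ x y, ((NormedSpace.exp (((-β : ℂ)) • H)) x y).im = 0 ∧
      0 ≤ ((NormedSpace.exp (((-β : ℂ)) • H)) x y).re := by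
  obtain ⟨c, hc⟩ : ∃ c : ℝ, ∀ x, (H x x).re ≤ c := Finite.exists_le _
  set M : Matrix X X ℂ := (β : ℂ) • ((c : ℂ) • (1 : Matrix X X ℂ) - H) with hMdef
  have hdiag : ∀ x, (H x x).im = 0 := by
    intro x
    have h := congrFun (congrFun hHerm x) x
    rw [Matrix.conjTranspose_apply] at h
    have := Complex.conj_eq_iff_im.mp h
    exact this
  have hM : ∀ x y, (M x y).im = 0 ∧ 0 ≤ (M x y).re := by
    intro x y
    by_cases h : x = y
    · subst h
      simp only [hMdef, Matrix.smul_apply, Matrix.sub_apply, Matrix.one_apply_eq, smul_eq_mul]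
      constructor
      · simp [Complex.mul_im, hdiag x]
      · simp only [Complex.mul_re, Complex.ofReal_re, Complex.ofReal_im, zero_mul, sub_zero,
          Complex.sub_im, Complex.sub_re, hdiag x]
        simp only [Complex.mul_im, Complex.mul_re, Complex.ofReal_re, Complex.ofReal_im,
          Complex.one_re, Complex.one_im, mul_one, mul_zero, zero_mul, sub_zero, hdiag x]
        ring_nf
        nlinarith [hc x, hβ]
    · have h2 := hstoq x y h
      simp only [hMdef, Matrix.smul_apply, Matrix.sub_apply, Matrix.one_apply_ne h,
        smul_eq_mul, mul_zero, zero_sub]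
      constructor
      · simp [Complex.mul_im, h2.1]
      · simp only [Complex.mul_re, Complex.ofReal_re, Complex.ofReal_im, zero_mul, sub_zero,
          Complex.neg_re, Complex.neg_im, h2.1]
        nlinarith [h2.2, hβ]
  have hsplit : (-β : ℂ) • H = ((-(β * c) : ℂ)) • (1 : Matrix X X ℂ) + M := by
    rw [hMdef]
    push_cast
    rw [smul_sub]
    rw [smul_smul]
    push_cast
    module
  have hcomm : Commute (((-(β * c) : ℂ)) • (1 : Matrix X X ℂ)) M :=
    ((Commute.one_left M).smul_left _)
  intro x y
  rw [hsplit, Matrix.exp_add_of_commute _ _ hcomm]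
  have hscal : NormedSpace.exp (((-(β * c) : ℂ)) • (1 : Matrix X X ℂ))
      = Complex.exp (-(β * c)) • (1 : Matrix X X ℂ) := by
    letI : SeminormedRing (Matrix X X ℂ) := Matrix.linftyOpSemiNormedRing
    letI : NormedRing (Matrix X X ℂ) := Matrix.linftyOpNormedRing
    letI : NormedAlgebra ℂ (Matrix X X ℂ) := Matrix.linftyOpNormedAlgebra
    have h1 : ((-(β * c) : ℂ)) • (1 : Matrix X X ℂ)
        = algebraMap ℂ (Matrix X X ℂ) (-(β * c) : ℂ) := by
      rw [Algebra.algebraMap_eq_smul_one]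
    rw [h1]
    erw [← NormedSpace.algebraMap_exp_comm]
    rw [← Complex.exp_eq_exp_ℂ, Algebra.algebraMap_eq_smul_one]
  rw [hscal]
  have hE := entryGood_exp M hM x y
  have hmul : ((Complex.exp (-(β * c)) • (1 : Matrix X X ℂ)) * NormedSpace.exp M) x y
      = Complex.exp (-(β * c)) * (NormedSpace.exp M) x y := by
    rw [Matrix.smul_mul, Matrix.one_mul, Matrix.smul_apply, smul_eq_mul]
  rw [hmul]
  have hexp : Complex.exp (-(β * c)) = ((Real.exp (-(β * c)) : ℝ) : ℂ) := by
    rw [Complex.ofReal_exp]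
    push_cast
    ring_nf
  rw [hexp]
  constructor
  · rw [Complex.mul_im]
    simp only [Complex.ofReal_im, Complex.ofReal_re, zero_mul, hE.1, mul_zero, add_zero, zero_add]
  · rw [Complex.mul_re]
    simp only [Complex.ofReal_re, Complex.ofReal_im, zero_mul, sub_zero]
    exact mul_nonneg (Real.exp_pos _).le hE.2
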